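/- In the Warden's Game on S ⊆ T(n,k) (closed under rotations) with goal α, from any position γb ∈ S, if a is the greatest value less than b with aγ ∈ S, then an optimal move for the warden is either to move to aγ or to pass; i.e., moving to cγ for c < a is never strictly better for the warden. -/
import Mathlib


namespace UCG

abbrev Str (n k : ℕ) := Fin n → Fin k

def OneUp {n k : ℕ} (β γ : Str n k) : Prop :=
  ∃ i : Fin n, β i < γ i ∧ ∀ j : Fin n, j ≠ i → β j = γ j

def IncrTo {n k : ℕ} (S : Set (Str n k)) (β α : Str n k) : Prop :=
  β ∈ S ∧ Relation.ReflTransGen (fun x y => OneUp x y ∧ y ∈ S) β α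

def IsRotation {n k : ℕ} (β γ : Str n k) : Prop :=
  ∃ j : ℕ, ∀ i : Fin n, γ i = β ⟨(i.val + j) % n, Nat.mod_lt _ i.pos⟩

def ClosedUnderRot {n k : ℕ} (S : Set (Str n k)) : Prop :=
  ∀ β ∈ S, ∀ γ, IsRotation β γ → γ ∈ S

def shift {n k : ℕ} (c : Fin k) (β : Str n k) : Str n k :=
  fun i => if i.val = 0 then c else β ⟨i.val - 1, lt_of_le_of_lt (Nat.sub_le _ _) i.isLt⟩

def lastSym {n k : ℕ} (hn : 0 < n) (β : Str n k) : Fin k :=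
  β ⟨n - 1, Nat.sub_lt hn one_pos⟩

/-- `WinIn hn S tgt β m`: in the Warden's Game with legal positions `S`, starting
from position `β`, the prisoner can force the position `tgt` to be reached within
at most `m` moves, whatever the warden does.  A move from `β = γb` is either a
warden move to `cγ ∈ S` with `c < b`, or (if the warden passes) a prisoner move
to `cγ ∈ S` with `c ≥ b`. -/
inductive WinIn {n k : ℕ} (hn : 0 < n) (S : Set (Str n k)) (tgt : Str n k) :
    Str n k → ℕ → Prop
  | passWin (β : Str n k) (m : ℕ) (c : Fin k)
      (hc : lastSym hn β ≤ c) (hcS : shift c β ∈ S) (heq : shift c β = tgt)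
      (hW : ∀ c' : Fin k, c' < lastSym hn β → shift c' β ∈ S → shift c' β ≠ tgt →
        WinIn hn S tgt (shift c' β) m) :
      WinIn hn S tgt β (m + 1)
  | passStep (β : Str n k) (m : ℕ) (c : Fin k)
      (hc : lastSym hn β ≤ c) (hcS : shift c β ∈ S)
      (hwin : WinIn hn S tgt (shift c β) m)
      (hW : ∀ c' : Fin k, c' < lastSym hn β → shift c' β ∈ S → shift c' β ≠ tgt →
        WinIn hn S tgt (shift c' β) m) :
      WinIn hn S tgt β (m + 1)

noncomputable def remoteness {n k : ℕ} (hn : 0 < n) (S : Set (Str n k))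
    (tgt β : Str n k) : ℕ∞ :=
  sInf {e : ℕ∞ | ∃ t : ℕ, e = t ∧ WinIn hn S tgt β t}

def fshift {n k : ℕ} (b : Fin k) (β : Str n k) : Str n k :=
  fun i => if h : i.val = n - 1 then b else β ⟨i.val + 1, by have := i.isLt; omega⟩

def GreedyOk {n k : ℕ} (S : Set (Str n k)) (B : ℕ → Option (Str n k)) (m : ℕ)
    (β : Str n k) (b : Fin k) : Prop :=
  fshift b β ∈ S ∧ ∀ i : ℕ, 1 ≤ i → i ≤ m → B i ≠ some (fshift b β)

def IsGreedy {n k : ℕ} (S : Set (Str n k)) (α : Str n k)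
    (B : ℕ → Option (Str n k)) : Prop :=
  B 0 = some α ∧
  (∀ m : ℕ, B m = none → B (m + 1) = none) ∧
  ∀ m : ℕ, ∀ β : Str n k, B m = some β →
    ((1 ≤ m ∧ β = α) → B (m + 1) = none) ∧
    ((m = 0 ∨ β ≠ α) →
      ((¬ ∃ b : Fin k, GreedyOk S B m β b) → B (m + 1) = none) ∧
      (∀ b : Fin k, GreedyOk S B m β b → (∀ b' : Fin k, b' < b → ¬ GreedyOk S B m β b') →
        B (m + 1) = some (fshift b β)))

def CycSubstr {m n k : ℕ} (hn : 0 < n) (γ : Str m k) (β : Str n k) : Prop :=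
  ∃ j : ℕ, ∀ i : Fin m, β ⟨(j + i.val) % n, Nat.mod_lt _ hn⟩ = γ i



section Aux

variable {n k : ℕ}

/-! ### Coordinate lemmas -/

lemma shift_apply_zero (hn : 0 < n) (c : Fin k) (β : Str n k) :
    shift c β ⟨0, hn⟩ = c := by
  simp [shift]

lemma shift_apply_succ (c : Fin k) (β : Str n k) (i : ℕ) (h : i + 1 < n) :
    shift c β ⟨i + 1, h⟩ = β ⟨i, by omega⟩ := by
  simp [shift]

lemma first_of_shift_eq (hn : 0 < n) {c c' : Fin k} {β β' : Str n k}
    (h : shift c β = shift c' β') : c = c' := by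
  have := congrFun h ⟨0, hn⟩
  simpa [shift] using this

lemma agree_of_shift_eq {c c' : Fin k} {β β' : Str n k}
    (h : shift c β = shift c' β') :
    ∀ (i : ℕ) (hi : i < n), i < n - 1 → β ⟨i, hi⟩ = β' ⟨i, hi⟩ := by
  intro i hi hi'
  have h2 := congrFun h ⟨i + 1, by omega⟩
  rw [shift_apply_succ, shift_apply_succ] at h2
  exact h2

lemma shift_congr {β β' : Str n k}
    (hag : ∀ (i : ℕ) (hi : i < n), i < n - 1 → β ⟨i, hi⟩ = β' ⟨i, hi⟩)
    (c : Fin k) : shift c β = shift c β' := by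
  funext i
  by_cases h0 : i.val = 0
  · simp [shift, h0]
  · simp only [shift, h0, if_false]
    exact hag _ _ (by have := i.isLt; omega)

lemma eq_of_agree_last (hn : 0 < n) {β β' : Str n k}
    (hag : ∀ (i : ℕ) (hi : i < n), i < n - 1 → β ⟨i, hi⟩ = β' ⟨i, hi⟩)
    (hl : lastSym hn β = lastSym hn β') : β = β' := by
  funext i
  rcases Nat.lt_or_ge i.val (n-1) with h | h
  · have := hag i.val i.isLt h
    simpa using this
  · have hi : i = (⟨n-1, Nat.sub_lt hn one_pos⟩ : Fin n) := by
      apply Fin.ext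
      have := i.isLt
      simp
      omega
    rw [hi]
    exact hl

/-- Rotation closure: the "rotation pass" child of a member is a member. -/
lemma rot_mem {S : Set (Str n k)} (hS : ClosedUnderRot S) (hn : 0 < n)
    {β : Str n k} (hβ : β ∈ S) : shift (lastSym hn β) β ∈ S := by
  apply hS β hβ
  refine ⟨n - 1, fun i => ?_⟩
  have hin := i.isLt
  by_cases h0 : i.val = 0
  · simp only [shift, h0, if_true, lastSym]
    congr 1
    apply Fin.ext
    show n - 1 = (0 + (n-1)) % n
    rw [Nat.zero_add]
    exact (Nat.mod_eq_of_lt (by omega)).symm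
  · simp only [shift, h0, if_false]
    congr 1
    apply Fin.ext
    show i.val - 1 = (i.val + (n-1)) % n
    have h2 : i.val + (n-1) = n + (i.val - 1) := by omega
    rw [h2, Nat.add_mod_left, Nat.mod_eq_of_lt (by omega)]

/-! ### WinIn lemmas -/

variable {hn : 0 < n} {S : Set (Str n k)} {α : Str n k}

lemma winIn_zero {β : Str n k} (h : WinIn hn S α β 0) : False := by
  cases h

lemma winIn_succ_iff {β : Str n k} {s : ℕ} :
    WinIn hn S α β (s + 1) ↔
      ((∃ z : Fin k, lastSym hn β ≤ z ∧ shift z β ∈ S ∧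
          (shift z β = α ∨ WinIn hn S α (shift z β) s)) ∧
        (∀ z : Fin k, z < lastSym hn β → shift z β ∈ S → shift z β ≠ α →
          WinIn hn S α (shift z β) s)) := by
  constructor
  · intro h
    cases h with
    | passWin β m c hc hcS heq hW => exact ⟨⟨c, hc, hcS, Or.inl heq⟩, hW⟩
    | passStep β m c hc hcS hwin hW => exact ⟨⟨c, hc, hcS, Or.inr hwin⟩, hW⟩
  · rintro ⟨⟨z, hz, hzS, hor⟩, hW⟩
    rcases hor with h | h
    · exact WinIn.passWin β s z hz hzS h hW
    · exact WinIn.passStep β s z hz hzS h hW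

lemma not_winIn_succ {β : Str n k} {s : ℕ} (h : ¬ WinIn hn S α β (s + 1)) :
    (∀ z : Fin k, lastSym hn β ≤ z → shift z β ∈ S →
        ¬ (shift z β = α ∨ WinIn hn S α (shift z β) s)) ∨
      (∃ z : Fin k, z < lastSym hn β ∧ shift z β ∈ S ∧ shift z β ≠ α ∧
        ¬ WinIn hn S α (shift z β) s) := by
  by_contra hcon
  push_neg at hcon
  obtain ⟨⟨z, hz, hzS, hor⟩, hW⟩ := hcon
  exact h (winIn_succ_iff.mpr ⟨⟨z, hz, hzS, hor⟩, fun z hz hzS hne => hW z hz hzS hne⟩)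

lemma winIn_succ_of {β : Str n k} {m : ℕ} (h : WinIn hn S α β m) :
    WinIn hn S α β (m + 1) := by
  induction h with
  | passWin β m c hc hcS heq hW ih =>
      exact WinIn.passWin β (m+1) c hc hcS heq (fun c' h1 h2 h3 => ih c' h1 h2 h3)
  | passStep β m c hc hcS hwin hW ih1 ih2 =>
      exact WinIn.passStep β (m+1) c hc hcS ih1 (fun c' h1 h2 h3 => ih2 c' h1 h2 h3)

lemma winIn_mono {β : Str n k} {m m' : ℕ} (hle : m ≤ m') (h : WinIn hn S α β m) :
    WinIn hn S α β m' := by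
  induction m' with
  | zero => exact (Nat.le_zero.mp hle) ▸ h
  | succ m' ih =>
      rcases Nat.lt_or_ge m (m'+1) with h1 | h1
      · exact winIn_succ_of (ih (by omega))
      · have h2 : m = m' + 1 := by omega
        exact h2 ▸ h

lemma not_winIn_of_le {β : Str n k} {m m' : ℕ} (hle : m ≤ m')
    (h : ¬ WinIn hn S α β m') : ¬ WinIn hn S α β m :=
  fun hw => h (winIn_mono hle hw)

/-- `Ex β t`: the remoteness of `β` is exactly `t`. -/
def Ex (hn : 0 < n) (S : Set (Str n k)) (α : Str n k) (β : Str n k) (t : ℕ) : Prop :=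
  WinIn hn S α β t ∧ ∀ s, s < t → ¬ WinIn hn S α β s

lemma ex_zero {β : Str n k} (h : Ex hn S α β 0) : False := winIn_zero h.1

lemma ex_pos {β : Str n k} {t : ℕ} (h : Ex hn S α β t) : 1 ≤ t := by
  rcases Nat.eq_zero_or_pos t with h0 | h1
  · exact absurd (h0 ▸ h) ex_zero
  · exact h1

lemma exists_ex {β : Str n k} {t : ℕ} (h : WinIn hn S α β t) :
    ∃ v, v ≤ t ∧ Ex hn S α β v := by
  classical
  have hP : ∃ s, WinIn hn S α β s := ⟨t, h⟩
  refine ⟨Nat.find hP, Nat.find_min' hP h, Nat.find_spec hP, ?_⟩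
  intro s hs hw
  exact Nat.find_min hP hs hw

end Aux

section Main

variable {n k : ℕ} {hn : 0 < n} {S : Set (Str n k)} {α : Str n k}

/-- Exact child: a position of exact remoteness `t+1` (with `t ≥ 1`) has a child
(in `S`, different from the target) of exact remoteness `t`. -/
lemma exact_child {β : Str n k} {t : ℕ} (ht : 1 ≤ t) (h : Ex hn S α β (t+1)) :
    ∃ z : Fin k, shift z β ∈ S ∧ shift z β ≠ α ∧ Ex hn S α (shift z β) t := by
  obtain ⟨hw, hmin⟩ := h
  obtain ⟨⟨z0, hz0, hz0S, hor⟩, hW⟩ := winIn_succ_iff.mp hw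
  have hnw : ¬ WinIn hn S α β t := hmin t (by omega)
  obtain ⟨t', rfl⟩ : ∃ t', t = t' + 1 := ⟨t - 1, by omega⟩
  rcases not_winIn_succ hnw with hA | hB
  · have h1 := hA z0 hz0 hz0S
    push_neg at h1
    obtain ⟨hne, hnw'⟩ := h1
    rcases hor with h | h
    · exact absurd h hne
    · exact ⟨z0, hz0S, hne, h, fun s hs => not_winIn_of_le (by omega) hnw'⟩
  · obtain ⟨z, hz, hzS, hne, hnw'⟩ := hB
    exact ⟨z, hzS, hne, hW z hz hzS hne,
      fun s hs => not_winIn_of_le (by omega) hnw'⟩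

/-- Descending exact chain: from a position of exact remoteness `m` we can reach,
for any `1 ≤ v < m`, a position `Q` of exact remoteness `v+1` together with a child
of exact remoteness `v`. -/
lemma chain : ∀ (m : ℕ) {β : Str n k}, β ∈ S → ∀ {v : ℕ}, 1 ≤ v → v < m →
    Ex hn S α β m →
    ∃ (Q : Str n k) (z : Fin k), Q ∈ S ∧ Ex hn S α Q (v+1) ∧ shift z Q ∈ S ∧
      shift z Q ≠ α ∧ Ex hn S α (shift z Q) v := by
  intro m
  induction m using Nat.strong_induction_on with
  | _ m IH =>
    intro β hβ v h1 h2 hEx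
    rcases (by omega : m = v + 1 ∨ v + 1 < m) with rfl | hlt
    · obtain ⟨z, hzS, hne, hEz⟩ := exact_child h1 hEx
      exact ⟨β, z, hβ, hEx, hzS, hne, hEz⟩
    · obtain ⟨m', rfl⟩ : ∃ m', m = m' + 1 := ⟨m - 1, by omega⟩
      obtain ⟨z, hzS, hne, hEz⟩ := exact_child (by omega) hEx
      exact IH m' (by omega) hzS h1 (by omega) hEz

/-- The statement that positions in `S` with equal exact remoteness `t` coincide. -/
def InjStmt (hn : 0 < n) (S : Set (Str n k)) (α : Str n k) (t : ℕ) : Prop :=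
  ∀ β β' : Str n k, β ∈ S → β' ∈ S → Ex hn S α β t → Ex hn S α β' t → β = β'

/-- CORE: there is no configuration `c < a < f` (all shifts of a common suffix in
`S`) where the `c`-shift has exact remoteness `m` while both higher shifts are
winnable within `m - 1`. -/
lemma core (hS : ClosedUnderRot S) {m : ℕ}
    (IH : ∀ s, s < m → InjStmt hn S α s)
    (P : Str n k) (c a f : Fin k) (hca : c < a) (haf : a < f)
    (hcS : shift c P ∈ S) (hcne : shift c P ≠ α) (hcE : Ex hn S α (shift c P) m)
    (haS : shift a P ∈ S) (haW : shift a P = α ∨ WinIn hn S α (shift a P) (m-1))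
    (hfS : shift f P ∈ S) (hfW : shift f P = α ∨ WinIn hn S α (shift f P) (m-1)) :
    False := by
  have hm : 1 ≤ m := ex_pos hcE
  -- hub condition derived from the chain
  have HUB : ∀ (x : Fin k), c < x → shift x P ∈ S → shift x P ≠ α →
      ∀ v, 1 ≤ v → v < m → Ex hn S α (shift x P) v →
      ∀ (y : Fin k), c < y → shift y P ∈ S →
        ¬ (shift y P = α ∨ WinIn hn S α (shift y P) (v-1)) := by
    intro x hcx hxS hxne v hv1 hvm hxE y hcy hyS
    obtain ⟨Q, z, hQS, hQE, hzS, hzne, hzE⟩ := chain m hcS hv1 hvm hcE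
    have hid : shift z Q = shift x P := IH v hvm _ _ hzS hxS hzE hxE
    have hshift : ∀ w : Fin k, shift w Q = shift w P :=
      shift_congr (agree_of_shift_eq hid)
    obtain ⟨hQw, hQmin⟩ := hQE
    obtain ⟨⟨z0, hz0, hz0S, hor0⟩, hWQ⟩ := winIn_succ_iff.mp hQw
    have hce : ¬ c < lastSym hn Q := by
      intro hlt
      have h2 := hWQ c hlt (by rw [hshift]; exact hcS) (by rw [hshift]; exact hcne)
      rw [hshift] at h2
      exact hcE.2 v hvm h2
    obtain ⟨v', rfl⟩ : ∃ v', v = v' + 1 := ⟨v - 1, by omega⟩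
    have hnQ : ¬ WinIn hn S α Q (v' + 1) := hQmin _ (by omega)
    rcases not_winIn_succ hnQ with hA | hB
    · have hy : lastSym hn Q ≤ y := le_trans (not_lt.mp hce) (le_of_lt hcy)
      have h3 := hA y hy (by rw [hshift]; exact hyS)
      rw [hshift] at h3
      simpa using h3
    · obtain ⟨zB, hzB, hzBS, hzBne, hzBnw⟩ := hB
      have hwin := hWQ zB hzB hzBS hzBne
      have hEzB : Ex hn S α (shift zB Q) (v'+1) :=
        ⟨hwin, fun s hs => not_winIn_of_le (by omega) hzBnw⟩
      have h4 : shift zB Q = shift x P := IH _ hvm _ _ hzBS hxS hEzB hxE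
      have h5 : shift zB Q = shift x Q := h4.trans (hshift x).symm
      have h6 : zB = x := first_of_shift_eq hn h5
      have h7 : zB < x := lt_of_lt_of_le hzB (le_trans (not_lt.mp hce) (le_of_lt hcx))
      exact absurd h6 (ne_of_lt h7)
  -- final comparisons
  by_cases hfα : shift f P = α
  · by_cases haα : shift a P = α
    · exact absurd (first_of_shift_eq hn (haα.trans hfα.symm)) (ne_of_lt haf)
    · -- f is α, a is not: use hub of a against f
      have haw : WinIn hn S α (shift a P) (m-1) := haW.resolve_left haα
      obtain ⟨va, hva, hvaE⟩ := exists_ex haw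
      have hva1 : 1 ≤ va := ex_pos hvaE
      have hub := HUB a hca haS haα va hva1 (by omega) hvaE f (lt_trans hca haf) hfS
      exact hub (Or.inl hfα)
  · by_cases haα : shift a P = α
    · have hfw : WinIn hn S α (shift f P) (m-1) := hfW.resolve_left hfα
      obtain ⟨vf, hvf, hvfE⟩ := exists_ex hfw
      have hvf1 : 1 ≤ vf := ex_pos hvfE
      have hub := HUB f (lt_trans hca haf) hfS hfα vf hvf1 (by omega) hvfE a hca haS
      exact hub (Or.inl haα)
    · have haw : WinIn hn S α (shift a P) (m-1) := haW.resolve_left haα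
      have hfw : WinIn hn S α (shift f P) (m-1) := hfW.resolve_left hfα
      obtain ⟨va, hva, hvaE⟩ := exists_ex haw
      obtain ⟨vf, hvf, hvfE⟩ := exists_ex hfw
      have hva1 : 1 ≤ va := ex_pos hvaE
      have hvf1 : 1 ≤ vf := ex_pos hvfE
      rcases lt_trichotomy va vf with h | h | h
      · have hub := HUB f (lt_trans hca haf) hfS hfα vf hvf1 (by omega) hvfE a hca haS
        exact hub (Or.inr (winIn_mono (by omega) hvaE.1))
      · have := IH va (by omega) _ _ haS hfS hvaE (h ▸ hvfE)
        exact absurd (first_of_shift_eq hn this) (ne_of_lt haf)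
      · have hub := HUB a hca haS haα va hva1 (by omega) hvaE f (lt_trans hca haf) hfS
        exact hub (Or.inr (winIn_mono (by omega) hvfE.1))


/-- Injectivity of exact remoteness for positions differing only in the last symbol. -/
lemma injlast (hS : ClosedUnderRot S) {t : ℕ} (IH : ∀ s, s < t → InjStmt hn S α s)
    {β β' : Str n k} (hβ : β ∈ S) (hβ' : β' ∈ S)
    (hagree : ∀ (i : ℕ) (hi : i < n), i < n - 1 → β ⟨i, hi⟩ = β' ⟨i, hi⟩)
    (hlt : lastSym hn β < lastSym hn β')
    (hE : Ex hn S α β t) (hE' : Ex hn S α β' t) : False := by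
  have ht1 : 1 ≤ t := ex_pos hE
  have hsh : ∀ w : Fin k, shift w β = shift w β' := shift_congr hagree
  obtain ⟨hw, hmin⟩ := hE
  obtain ⟨hw', hmin'⟩ := hE'
  have huS : shift (lastSym hn β) β ∈ S := rot_mem hS hn hβ
  rcases Nat.lt_or_ge t 2 with ht | ht
  · -- t = 1
    have ht2 : t = 1 := by omega
    subst ht2
    obtain ⟨⟨p0, hp0, hp0S, hor0⟩, hW⟩ := winIn_succ_iff.mp hw
    obtain ⟨⟨p1, hp1, hp1S, hor1⟩, hW'⟩ := winIn_succ_iff.mp hw'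
    have h1 : shift p1 β' = α := by
      rcases hor1 with h | h
      · exact h
      · exact absurd h winIn_zero
    have huα : shift (lastSym hn β) β = α := by
      by_contra hne
      have h2 := hW' (lastSym hn β) hlt (by rw [← hsh]; exact huS) (by rw [← hsh]; exact hne)
      exact winIn_zero h2
    have h3 : p1 = lastSym hn β := first_of_shift_eq hn (h1.trans huα.symm)
    rw [h3] at hp1
    exact absurd hp1 (not_le.mpr hlt)
  · -- t ≥ 2
    obtain ⟨s, rfl⟩ : ∃ s, t = s + 2 := ⟨t - 2, by omega⟩
    obtain ⟨⟨p0, hp0, hp0S, hor0⟩, hW⟩ := winIn_succ_iff.mp hw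
    obtain ⟨⟨p1, hp1, hp1S, hor1⟩, hW'⟩ := winIn_succ_iff.mp hw'
    have hnβ : ¬ WinIn hn S α β (s+1) := hmin _ (by omega)
    rcases not_winIn_succ hnβ with hA | hB
    · -- case A
      have hu1 := hA (lastSym hn β) (le_refl _) huS
      push_neg at hu1
      obtain ⟨hune, hunw⟩ := hu1
      have huw : WinIn hn S α (shift (lastSym hn β) β) (s+1) := by
        have h2 := hW' (lastSym hn β) hlt (by rw [← hsh]; exact huS) (by rw [← hsh]; exact hune)
        rwa [← hsh] at h2
      have huE : Ex hn S α (shift (lastSym hn β) β) (s+1) :=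
        ⟨huw, fun s' hs' => not_winIn_of_le (by omega) hunw⟩
      have hp1' := hA p1 (le_trans (le_of_lt hlt) hp1) (by rw [hsh]; exact hp1S)
      push_neg at hp1'
      obtain ⟨hp1ne, hp1nw⟩ := hp1'
      have hp1w : WinIn hn S α (shift p1 β) (s+1) := by
        rcases hor1 with h | h
        · exact absurd (by rw [hsh]; exact h) hp1ne
        · rwa [← hsh] at h
      have hp1E : Ex hn S α (shift p1 β) (s+1) :=
        ⟨hp1w, fun s' hs' => not_winIn_of_le (by omega) hp1nw⟩
      have h4 := IH (s+1) (by omega) _ _ huS (by rw [hsh]; exact hp1S) huE hp1E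
      have h5 : lastSym hn β = p1 := first_of_shift_eq hn h4
      rw [← h5] at hp1
      exact absurd hp1 (not_le.mpr hlt)
    · -- case B
      obtain ⟨zB, hzB, hzBS, hzBne, hzBnw⟩ := hB
      have hZw : WinIn hn S α (shift zB β) (s+1) := hW zB hzB hzBS hzBne
      have hZE : Ex hn S α (shift zB β) (s+1) :=
        ⟨hZw, fun s' hs' => not_winIn_of_le (by omega) hzBnw⟩
      have bound : ∀ w : Fin k, shift w β ∈ S →
          (shift w β = α ∨ WinIn hn S α (shift w β) (s+1)) → w ≠ zB →
          (shift w β = α ∨ WinIn hn S α (shift w β) s) := by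
        intro w hwS hor hne
        rcases hor with h | h
        · exact Or.inl h
        · obtain ⟨vw, hvw, hvwE⟩ := exists_ex h
          rcases Nat.lt_or_ge vw (s+1) with h1 | h1
          · exact Or.inr (winIn_mono (by omega) hvwE.1)
          · have h2 : vw = s + 1 := by omega
            subst h2
            have h3 := IH (s+1) (by omega) _ _ hwS hzBS hvwE hZE
            exact absurd (first_of_shift_eq hn h3) hne
      have hu' : shift (lastSym hn β) β = α ∨
          WinIn hn S α (shift (lastSym hn β) β) (s+1) := by
        by_cases hα : shift (lastSym hn β) β = α
        · exact Or.inl hα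
        · right
          have h2 := hW' (lastSym hn β) hlt (by rw [← hsh]; exact huS) (by rw [← hsh]; exact hα)
          rwa [← hsh] at h2
      have hu2 : shift (lastSym hn β) β = α ∨ WinIn hn S α (shift (lastSym hn β) β) s :=
        bound _ huS hu' (ne_of_gt hzB)
      obtain ⟨r2, hr2gt, hr2S, hr2W⟩ : ∃ r2 : Fin k, lastSym hn β < r2 ∧ shift r2 β ∈ S ∧
          (shift r2 β = α ∨ WinIn hn S α (shift r2 β) (s+1)) := by
        rcases eq_or_lt_of_le hp0 with heq | hlt2
        · refine ⟨p1, lt_of_lt_of_le hlt hp1, by rw [hsh]; exact hp1S, ?_⟩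
          rcases hor1 with h | h
          · exact Or.inl (by rw [hsh]; exact h)
          · exact Or.inr (by rw [hsh]; exact h)
        · exact ⟨p0, hlt2, hp0S, hor0⟩
      have hr2 : shift r2 β = α ∨ WinIn hn S α (shift r2 β) s :=
        bound _ hr2S hr2W (ne_of_gt (lt_trans hzB hr2gt))
      exact core hS (fun s' hs' => IH s' (by omega)) β zB (lastSym hn β) r2 hzB hr2gt
        hzBS hzBne hZE huS hu2 hr2S hr2

/-- Exact remoteness is injective on members of a rotation-closed set. -/
lemma inj (hS : ClosedUnderRot S) (t : ℕ) : InjStmt hn S α t := by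
  induction t using Nat.strong_induction_on with
  | _ t IH =>
    intro β β' hβ hβ' hE hE'
    rcases Nat.eq_zero_or_pos t with rfl | ht1
    · exact absurd hE ex_zero
    have hagree : ∀ (i : ℕ) (hi : i < n), i < n - 1 → β ⟨i, hi⟩ = β' ⟨i, hi⟩ := by
      rcases Nat.lt_or_ge t 2 with ht | ht
      · obtain ⟨hw, _⟩ := hE
        obtain ⟨hw', _⟩ := hE'
        have ht2 : t = 1 := by omega
        subst ht2
        obtain ⟨⟨z0, hz0, hz0S, hor0⟩, _⟩ := winIn_succ_iff.mp hw
        obtain ⟨⟨z1, hz1, hz1S, hor1⟩, _⟩ := winIn_succ_iff.mp hw'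
        have h0 : shift z0 β = α := by
          rcases hor0 with h | h
          · exact h
          · exact absurd h winIn_zero
        have h1 : shift z1 β' = α := by
          rcases hor1 with h | h
          · exact h
          · exact absurd h winIn_zero
        exact agree_of_shift_eq (h0.trans h1.symm)
      · obtain ⟨t', rfl⟩ : ∃ t', t = t' + 1 := ⟨t - 1, by omega⟩
        obtain ⟨z, hzS, hzne, hzE⟩ := exact_child (by omega) hE
        obtain ⟨z', hzS', hzne', hzE'⟩ := exact_child (by omega) hE'
        exact agree_of_shift_eq (IH t' (by omega) _ _ hzS hzS' hzE hzE')
    rcases lt_trichotomy (lastSym hn β) (lastSym hn β') with h | h | h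
    · exact (injlast hS (fun s hs => IH s hs) hβ hβ' hagree h ⟨hE.1, hE.2⟩ ⟨hE'.1, hE'.2⟩).elim
    · exact eq_of_agree_last hn hagree h
    · exact ((injlast hS (fun s hs => IH s hs) hβ' hβ
        (fun i hi hi' => (hagree i hi hi').symm) h ⟨hE'.1, hE'.2⟩ ⟨hE.1, hE.2⟩)).elim

/-- Unfolding the remoteness value. -/
lemma remoteness_spec {β : Str n k} {r : ℕ} (h : remoteness hn S α β = (r : ℕ∞)) :
    WinIn hn S α β r ∧ ∀ s, s < r → ¬ WinIn hn S α β s := by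
  classical
  have h' : sInf {e : ℕ∞ | ∃ t : ℕ, e = t ∧ WinIn hn S α β t} = (r : ℕ∞) := h
  have hne : {e : ℕ∞ | ∃ t : ℕ, e = t ∧ WinIn hn S α β t}.Nonempty := by
    by_contra hemp
    rw [Set.not_nonempty_iff_eq_empty] at hemp
    rw [hemp, sInf_empty] at h'
    exact (by simp : ((⊤ : ℕ∞) ≠ (r : ℕ∞))) h'
  obtain ⟨e, t0, he, hw0⟩ := hne
  have hP : ∃ s, WinIn hn S α β s := ⟨t0, hw0⟩
  have hmem : ((Nat.find hP : ℕ) : ℕ∞) ∈ {e : ℕ∞ | ∃ t : ℕ, e = t ∧ WinIn hn S α β t} :=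
    ⟨Nat.find hP, rfl, Nat.find_spec hP⟩
  have hlb : ∀ e ∈ {e : ℕ∞ | ∃ t : ℕ, e = t ∧ WinIn hn S α β t},
      ((Nat.find hP : ℕ) : ℕ∞) ≤ e := by
    rintro e ⟨t, rfl, hw⟩
    exact_mod_cast Nat.find_min' hP hw
  have hsinf : sInf {e : ℕ∞ | ∃ t : ℕ, e = t ∧ WinIn hn S α β t} =
      ((Nat.find hP : ℕ) : ℕ∞) := le_antisymm (sInf_le hmem) (le_sInf hlb)
  rw [hsinf] at h'
  have hfr : Nat.find hP = r := by exact_mod_cast h'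
  constructor
  · exact hfr ▸ Nat.find_spec hP
  · intro s hs hw
    have h2 := Nat.find_min' hP hw
    omega

end Main

/-- from a position `p = γb ∈ S`, if `a` is the greatest value below
`b` with `aγ ∈ S`, then any optimal decreasing warden move is to `aγ`: if moving to
`cγ` (with `c < b`) is optimal, i.e. `r(cγ) = m` where `r(γb) = m + 1`, then `c = a`. -/
theorem warden_optimal_decrement {n k : ℕ} (hn : 0 < n) (S : Set (Str n k))
    (hS : ClosedUnderRot S) (α : Str n k) (hα : α ∈ S)
    (p : Str n k) (hp : p ∈ S) (a : Fin k) (ha : a < lastSym hn p)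
    (haS : shift a p ∈ S)
    (hmax : ∀ c : Fin k, a < c → c < lastSym hn p → shift c p ∉ S)
    (c : Fin k) (hc : c < lastSym hn p) (hcS : shift c p ∈ S)
    (m : ℕ) (hrp : remoteness hn S α p = ((m + 1 : ℕ) : ℕ∞))
    (hrc : remoteness hn S α (shift c p) = (m : ℕ∞)) :
    c = a := by
  obtain ⟨hwp, hminp⟩ := remoteness_spec hrp
  obtain ⟨hwc, hminc⟩ := remoteness_spec hrc
  rcases Nat.eq_zero_or_pos m with rfl | hm
  · exact absurd hwc winIn_zero
  have hEp : Ex hn S α p (m+1) := ⟨hwp, hminp⟩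
  have hEc : Ex hn S α (shift c p) m := ⟨hwc, hminc⟩
  by_cases hcα : shift c p = α
  · -- the exact child of p is a non-target position of exact remoteness m,
    -- but α itself has exact remoteness m: contradiction with injectivity
    obtain ⟨z, hzS, hzne, hzE⟩ := exact_child hm hEp
    have hEα : Ex hn S α α m := hcα ▸ hEc
    exact absurd (inj hS m _ _ hzS hα hzE hEα) hzne
  · by_contra hne
    rcases lt_trichotomy c a with hca | hceq | hac
    · -- main case: c < a
      set q : Str n k := fun i => if i.val = n - 1 then a else p i with hq
      have hql : lastSym hn q = a := by
        simp only [hq, lastSym, if_true]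
      have hagq : ∀ (i : ℕ) (hi : i < n), i < n - 1 → q ⟨i, hi⟩ = p ⟨i, hi⟩ := by
        intro i hi hi'
        simp only [hq]
        have hcon : ((⟨i, hi⟩ : Fin n) : ℕ) ≠ n - 1 := by
          show i ≠ n - 1
          omega
        exact if_neg hcon
      have hshq : ∀ w : Fin k, shift w q = shift w p := shift_congr hagq
      have hqS : q ∈ S := by
        apply hS (shift a p) haS
        refine ⟨1, fun i => ?_⟩
        have hin := i.isLt
        by_cases hi : i.val = n - 1
        · have h1 : (i.val + 1) % n = 0 := by
            rw [hi]
            have h2 : n - 1 + 1 = n := by omega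
            rw [h2, Nat.mod_self]
          show (if i.val = n - 1 then a else p i) = _
          rw [if_pos hi]
          have h2 : (⟨(i.val + 1) % n, Nat.mod_lt _ i.pos⟩ : Fin n) = ⟨0, hn⟩ :=
            Fin.ext h1
          rw [h2, shift_apply_zero]
        · have h1 : (i.val + 1) % n = i.val + 1 := Nat.mod_eq_of_lt (by omega)
          show (if i.val = n - 1 then a else p i) = _
          rw [if_neg hi]
          have h2 : (⟨(i.val + 1) % n, Nat.mod_lt _ i.pos⟩ : Fin n) =
              ⟨i.val + 1, by omega⟩ := Fin.ext h1
          rw [h2, shift_apply_succ]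
      obtain ⟨⟨z0, hz0, hz0S, hor0⟩, hWp⟩ := winIn_succ_iff.mp hwp
      have hwq : WinIn hn S α q (m+1) := by
        apply winIn_succ_iff.mpr
        constructor
        · refine ⟨a, ?_, ?_, ?_⟩
          · rw [hql]
          · rw [hshq]; exact haS
          · rw [hshq]
            by_cases haα : shift a p = α
            · exact Or.inl haα
            · exact Or.inr (hWp a ha haS haα)
        · intro z hz hzS hzne
          rw [hql] at hz
          rw [hshq] at hzS hzne ⊢
          exact hWp z (lt_trans hz ha) hzS hzne
      have hnq : ¬ WinIn hn S α q m := by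
        intro hq2
        obtain ⟨m', rfl⟩ : ∃ m', m = m' + 1 := ⟨m - 1, by omega⟩
        obtain ⟨_, hWq⟩ := winIn_succ_iff.mp hq2
        have h3 := hWq c (by rw [hql]; exact hca) (by rw [hshq]; exact hcS)
          (by rw [hshq]; exact hcα)
        rw [hshq] at h3
        exact hminc m' (by omega) h3
      have hEq : Ex hn S α q (m+1) := ⟨hwq, fun s hs => not_winIn_of_le (by omega) hnq⟩
      have heq := inj hS (m+1) q p hqS hp hEq hEp
      have hlq : lastSym hn q = lastSym hn p := by rw [heq]
      rw [hql] at hlq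
      exact absurd hlq (ne_of_lt ha)
    · exact hne hceq
    · exact (hmax c hac hc) hcS

end UCG
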